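/- Let α = Nσ² and m = (α + √(α² + 4))/(4σ²). Then m > 0, and z(x) := -2σ²m(|x|² + 1) satisfies z(x) < 0 for all x ∈ ℝ^N and solves -2σ²Δz + |∇z|² + 4αz = 4|x|² on ℝ^N. -/

import Mathlib

noncomputable def laplacian {N : ℕ} (f : EuclideanSpace ℝ (Fin N) → ℝ)
    (x : EuclideanSpace ℝ (Fin N)) : ℝ :=
  ∑ i : Fin N, fderiv ℝ (fun y => fderiv ℝ f y (EuclideanSpace.single i 1)) x
      (EuclideanSpace.single i 1)

section aux
variable {N : ℕ} (c : ℝ)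

lemma aux_hasFDeriv (y : EuclideanSpace ℝ (Fin N)) :
    HasFDerivAt (fun x : EuclideanSpace ℝ (Fin N) => c * (‖x‖ ^ 2 + 1))
      (c • (2 • (innerSL ℝ y))) y := by
  have h := (hasStrictFDerivAt_norm_sq y).hasFDerivAt
  have := (h.add_const 1).const_mul c
  convert this using 1

lemma aux_fderiv (y : EuclideanSpace ℝ (Fin N)) :
    fderiv ℝ (fun x : EuclideanSpace ℝ (Fin N) => c * (‖x‖ ^ 2 + 1)) y
      = c • (2 • (innerSL ℝ y)) := (aux_hasFDeriv c y).fderiv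

lemma aux_gradient (y : EuclideanSpace ℝ (Fin N)) :
    gradient (fun x : EuclideanSpace ℝ (Fin N) => c * (‖x‖ ^ 2 + 1)) y
      = (2 * c) • y := by
  have : HasGradientAt (fun x : EuclideanSpace ℝ (Fin N) => c * (‖x‖ ^ 2 + 1))
      ((2 * c) • y) y := by
    rw [hasGradientAt_iff_hasFDerivAt]
    refine (aux_hasFDeriv c y).congr_fderiv ?_
    ext v
    simp [real_inner_smul_left, mul_comm, mul_assoc, mul_left_comm]
  exact this.gradient

lemma aux_laplacian (y : EuclideanSpace ℝ (Fin N)) :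
    laplacian (fun x : EuclideanSpace ℝ (Fin N) => c * (‖x‖ ^ 2 + 1)) y
      = 2 * c * N := by
  unfold laplacian
  have h1 : ∀ i : Fin N, (fun w : EuclideanSpace ℝ (Fin N) =>
      fderiv ℝ (fun x : EuclideanSpace ℝ (Fin N) => c * (‖x‖ ^ 2 + 1)) w
        (EuclideanSpace.single i 1))
      = fun w => (2 * c) • (EuclideanSpace.proj (𝕜 := ℝ) i) w := by
    intro i
    funext w
    rw [aux_fderiv]
    simp [real_inner_smul_left, EuclideanSpace.inner_single_right, mul_comm, mul_assoc]
  have h2 : ∀ i : Fin N,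
      fderiv ℝ (fun w : EuclideanSpace ℝ (Fin N) =>
        fderiv ℝ (fun x : EuclideanSpace ℝ (Fin N) => c * (‖x‖ ^ 2 + 1)) w
          (EuclideanSpace.single i 1)) y (EuclideanSpace.single i 1) = 2 * c := by
    intro i
    rw [h1 i]
    have : HasFDerivAt (fun w : EuclideanSpace ℝ (Fin N) =>
        (2 * c) • (EuclideanSpace.proj (𝕜 := ℝ) i) w)
        ((2 * c) • (EuclideanSpace.proj (𝕜 := ℝ) i)) y :=
      ((EuclideanSpace.proj (𝕜 := ℝ) i).hasFDerivAt).const_smul (2 * c)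
    rw [this.fderiv]
    simp [EuclideanSpace.single_apply]
  simp only [h2]
  simp [mul_comm]
end aux

theorem stmt8 (N : ℕ) (hN : 1 ≤ N) (σ α m : ℝ) (hσ : 0 < σ)
    (hα : α = N * σ ^ 2)
    (hm : m = (α + Real.sqrt (α ^ 2 + 4)) / (4 * σ ^ 2))
    (z : EuclideanSpace ℝ (Fin N) → ℝ)
    (hz : ∀ x, z x = -2 * σ ^ 2 * m * (‖x‖ ^ 2 + 1)) :
    0 < m ∧ (∀ x, z x < 0) ∧
      ∀ x, -2 * σ ^ 2 * laplacian z x + ‖gradient z x‖ ^ 2 + 4 * α * z x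
          = 4 * ‖x‖ ^ 2 := by
  have hs2 : Real.sqrt (α ^ 2 + 4) ^ 2 = α ^ 2 + 4 := by
    rw [Real.sq_sqrt]; positivity
  have hspos : 0 < Real.sqrt (α ^ 2 + 4) := by
    apply Real.sqrt_pos.mpr; positivity
  have hαpos : 0 < α := by
    rw [hα]
    have h1 : (1 : ℝ) ≤ N := by exact_mod_cast hN
    nlinarith [sq_nonneg σ]
  have hmpos : 0 < m := by
    rw [hm]; positivity
  set c : ℝ := -2 * σ ^ 2 * m with hc
  have hcneg : c < 0 := by nlinarith
  have hceq : c ^ 2 + α * c = 1 := by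
    have hc' : c = -(α + Real.sqrt (α ^ 2 + 4)) / 2 := by
      rw [hc, hm]
      field_simp
      ring
    rw [hc']
    nlinarith [hs2]
  have hzf : z = fun x : EuclideanSpace ℝ (Fin N) => c * (‖x‖ ^ 2 + 1) := by
    funext x; rw [hz x]
  refine ⟨hmpos, fun x => ?_, fun x => ?_⟩
  · rw [hz x]
    have h2 : 0 < ‖x‖ ^ 2 + 1 := by positivity
    nlinarith
  · rw [hzf, aux_laplacian, aux_gradient, norm_smul]
    have hα' : (N : ℝ) * σ ^ 2 = α := hα.symm
    have habs : ‖(2 : ℝ) * c‖ ^ 2 = 4 * c ^ 2 := by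
      rw [Real.norm_eq_abs, sq_abs]; ring
    rw [mul_pow, habs]
    linear_combination (-4*c) * hα' + (4*‖x‖^2) * hceq
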